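/- ∑_{0<n_1<n_2<n_3} 1/((n_1−1/2)^2·(n_2−1/2)^2·(n_3−1/2)^2) = (1/48)·∑_{n=1}^∞ 1/(n−1/2)^6; that is, t(2,2,2) = (1/48)·t(6). -/

import Mathlib

set_option maxHeartbeats 1000000

open Real ENNReal

/-! ### Bernoulli numbers and zeta(6) -/

lemma bern_five : bernoulli' 5 = 0 := by
  have h2 : Nat.choose 5 2 = 10 := by decide
  have h3 : Nat.choose 5 3 = 10 := by decide
  rw [bernoulli'_def]
  norm_num [Finset.sum_range_succ, h2, h3]

lemma bern_six : bernoulli' 6 = 1/42 := by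
  have h2 : Nat.choose 6 2 = 15 := by decide
  have h3 : Nat.choose 6 3 = 20 := by decide
  have h4 : Nat.choose 6 4 = 15 := by decide
  rw [bernoulli'_def]
  norm_num [Finset.sum_range_succ, h2, h3, h4, bern_five]

lemma hasSum_zeta_six : HasSum (fun n : ℕ => (1 : ℝ) / (n : ℝ) ^ 6) (π ^ 6 / 945) := by
  have h := hasSum_zeta_nat (k := 3) (by norm_num)
  have hb : ((bernoulli 6 : ℚ) : ℝ) = 1/42 := by
    rw [bernoulli_eq_bernoulli'_of_ne_one (by norm_num), bern_six]; norm_num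
  norm_num [Nat.factorial] at h
  rw [hb] at h
  convert h using 1
  · funext n; rw [one_div]
  · ring

/-! ### sums over half-integers -/

lemma oddsum {s : ℕ} (hs : 2 ≤ s) {z : ℝ}
    (hz : HasSum (fun n : ℕ => (1 : ℝ) / (n : ℝ) ^ s) z) :
    HasSum (fun n : ℕ => (1 : ℝ) / ((n : ℝ) + 1/2) ^ s) ((2 ^ s - 1) * z) := by
  have hev : HasSum (fun k : ℕ => (1 : ℝ) / ((2 * k : ℕ) : ℝ) ^ s) (((2:ℝ) ^ s)⁻¹ * z) := by
    have h := hz.mul_left ((2:ℝ) ^ s)⁻¹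
    convert h using 2 with k
    · rfl
    push_cast
    rw [mul_pow]
    rw [one_div, one_div, mul_inv]
  have hsum1 : Summable (fun k : ℕ => (1 : ℝ) / ((k : ℝ) + 1) ^ s) := by
    have := (summable_nat_add_iff (f := fun n : ℕ => (1 : ℝ) / (n : ℝ) ^ s) 1).2 hz.summable
    convert this using 2 with k
    · rfl
    push_cast
    ring_nf
  have hoddsummable : Summable (fun k : ℕ => (1 : ℝ) / ((2 * k + 1 : ℕ) : ℝ) ^ s) := by
    apply Summable.of_nonneg_of_le (fun k => by positivity) _ hsum1
    intro k
    apply one_div_le_one_div_of_le (by positivity)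
    apply pow_le_pow_left₀ (by positivity)
    push_cast; linarith [Nat.cast_nonneg (α := ℝ) k]
  have htsum : ∑' k : ℕ, (1 : ℝ) / ((2 * k + 1 : ℕ) : ℝ) ^ s = z - ((2:ℝ) ^ s)⁻¹ * z := by
    have h := tsum_even_add_odd (f := fun n : ℕ => (1 : ℝ) / (n : ℝ) ^ s) hev.summable hoddsummable
    rw [hz.tsum_eq, hev.tsum_eq] at h
    linarith
  have hodd : HasSum (fun k : ℕ => (1 : ℝ) / ((2 * k + 1 : ℕ) : ℝ) ^ s)
      (z - ((2:ℝ) ^ s)⁻¹ * z) := hoddsummable.hasSum_iff.2 htsum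
  have h := hodd.mul_left ((2:ℝ) ^ s)
  have h2 : (2:ℝ) ^ s ≠ 0 := by positivity
  convert h using 1
  · rfl
  · funext k
    have h2k : ((2 * k + 1 : ℕ) : ℝ) ≠ 0 := by positivity
    have he : ((k : ℝ) + 1/2) = ((2 * k + 1 : ℕ) : ℝ) / 2 := by push_cast; ring
    rw [he, div_pow, one_div_div, div_eq_mul_one_div]
  · field_simp

lemma hs_two : HasSum (fun n : ℕ => (1 : ℝ) / ((n : ℝ) + 1/2) ^ 2) (π ^ 2 / 2) := by
  have := oddsum le_rfl hasSum_zeta_two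
  convert this using 1
  ring

lemma hs_four : HasSum (fun n : ℕ => (1 : ℝ) / ((n : ℝ) + 1/2) ^ 4) (π ^ 4 / 6) := by
  have := oddsum (by norm_num) hasSum_zeta_four
  convert this using 1
  ring

lemma hs_six : HasSum (fun n : ℕ => (1 : ℝ) / ((n : ℝ) + 1/2) ^ 6) (π ^ 6 / 15) := by
  have := oddsum (by norm_num) hasSum_zeta_six
  convert this using 1
  ring

/-- Trichotomy splitting of a double sum in `ℝ≥0∞`. -/
lemma split2' (F : ℕ → ℕ → ℝ≥0∞) :
    ∑' (a : ℕ) (b : ℕ), F a b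
      = (∑' (i : ℕ) (j : ℕ), F i (i+j+1)) + (∑' (n : ℕ), F n n)
        + (∑' (i : ℕ) (j : ℕ), F (i+j+1) i) := by
  have hsplit : ∑' (p : ℕ × ℕ), F p.1 p.2
      = (∑' (p : ℕ × ℕ), if p.1 < p.2 then F p.1 p.2 else 0)
        + (∑' (p : ℕ × ℕ), if p.1 = p.2 then F p.1 p.2 else 0)
        + (∑' (p : ℕ × ℕ), if p.2 < p.1 then F p.1 p.2 else 0) := by
    rw [← ENNReal.tsum_add, ← ENNReal.tsum_add]
    refine tsum_congr fun p => ?_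
    rcases lt_trichotomy p.1 p.2 with h | h | h
    · rw [if_pos h, if_neg h.ne, if_neg (lt_asymm h), add_zero, add_zero]
    · rw [if_neg (by omega), if_pos h, if_neg (by omega), zero_add, add_zero]
    · rw [if_neg (lt_asymm h), if_neg (by omega), if_pos h, zero_add, zero_add]
  have hA : (∑' (p : ℕ × ℕ), if p.1 < p.2 then F p.1 p.2 else 0)
      = ∑' (i : ℕ) (j : ℕ), F i (i+j+1) := by
    have hinj : Function.Injective (fun q : ℕ × ℕ => (q.1, q.1 + q.2 + 1)) := by
      intro a b h
      simp only [Prod.ext_iff] at h ⊢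
      omega
    have hsupp : Function.support (fun p : ℕ × ℕ => if p.1 < p.2 then F p.1 p.2 else 0)
        ⊆ Set.range (fun q : ℕ × ℕ => (q.1, q.1 + q.2 + 1)) := by
      intro p hp
      have hlt : p.1 < p.2 := by
        by_contra hc
        exact hp (if_neg hc)
      refine ⟨(p.1, p.2 - p.1 - 1), ?_⟩
      obtain ⟨p1, p2⟩ := p
      simp only [Prod.mk.injEq, true_and, and_true]
      simp only at hlt
      omega
    calc (∑' (p : ℕ × ℕ), if p.1 < p.2 then F p.1 p.2 else 0)
        = ∑' (q : ℕ × ℕ), if q.1 < q.1 + q.2 + 1 then F q.1 (q.1 + q.2 + 1) else 0 :=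
          (hinj.tsum_eq hsupp).symm
      _ = ∑' (q : ℕ × ℕ), F q.1 (q.1 + q.2 + 1) := tsum_congr fun q => if_pos (by omega)
      _ = ∑' (i : ℕ) (j : ℕ), F i (i+j+1) := ENNReal.tsum_prod'
  have hB : (∑' (p : ℕ × ℕ), if p.1 = p.2 then F p.1 p.2 else 0)
      = ∑' (n : ℕ), F n n := by
    have hinj : Function.Injective (fun n : ℕ => ((n, n) : ℕ × ℕ)) := by
      intro a b h
      exact (Prod.ext_iff.mp h).1
    have hsupp : Function.support (fun p : ℕ × ℕ => if p.1 = p.2 then F p.1 p.2 else 0)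
        ⊆ Set.range (fun n : ℕ => ((n, n) : ℕ × ℕ)) := by
      intro p hp
      have heq : p.1 = p.2 := by
        by_contra hc
        exact hp (if_neg hc)
      refine ⟨p.1, ?_⟩
      obtain ⟨p1, p2⟩ := p
      simp only at heq
      simp [heq]
    calc (∑' (p : ℕ × ℕ), if p.1 = p.2 then F p.1 p.2 else 0)
        = ∑' (n : ℕ), if (n : ℕ) = n then F n n else 0 := (hinj.tsum_eq hsupp).symm
      _ = ∑' (n : ℕ), F n n := tsum_congr fun n => if_pos rfl
  have hC : (∑' (p : ℕ × ℕ), if p.2 < p.1 then F p.1 p.2 else 0)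
      = ∑' (i : ℕ) (j : ℕ), F (i+j+1) i := by
    have hinj : Function.Injective (fun q : ℕ × ℕ => ((q.1 + q.2 + 1, q.1) : ℕ × ℕ)) := by
      intro a b h
      simp only [Prod.ext_iff] at h ⊢
      omega
    have hsupp : Function.support (fun p : ℕ × ℕ => if p.2 < p.1 then F p.1 p.2 else 0)
        ⊆ Set.range (fun q : ℕ × ℕ => ((q.1 + q.2 + 1, q.1) : ℕ × ℕ)) := by
      intro p hp
      have hlt : p.2 < p.1 := by
        by_contra hc
        exact hp (if_neg hc)
      refine ⟨(p.2, p.1 - p.2 - 1), ?_⟩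
      obtain ⟨p1, p2⟩ := p
      simp only [Prod.mk.injEq, true_and, and_true]
      simp only at hlt
      omega
    calc (∑' (p : ℕ × ℕ), if p.2 < p.1 then F p.1 p.2 else 0)
        = ∑' (q : ℕ × ℕ), if q.1 < q.1 + q.2 + 1 then F (q.1 + q.2 + 1) q.1 else 0 :=
          (hinj.tsum_eq hsupp).symm
      _ = ∑' (q : ℕ × ℕ), F (q.1 + q.2 + 1) q.1 := tsum_congr fun q => if_pos (by omega)
      _ = ∑' (i : ℕ) (j : ℕ), F (i+j+1) i := ENNReal.tsum_prod'
  rw [← ENNReal.tsum_prod' (f := fun p : ℕ × ℕ => F p.1 p.2), hsplit, hA, hB, hC]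

lemma key (g : ℕ → ℝ≥0∞) :
    6 * (∑' (i : ℕ) (j : ℕ) (k : ℕ), g i * g (i+j+1) * g (i+j+k+2))
        + 3 * ((∑' n, g n) * (∑' n, g n ^ 2))
      = (∑' n, g n) ^ 3 + 2 * ∑' n, g n ^ 3 := by
  have m1 : ∀ f h : ℕ → ℝ≥0∞, (∑' n, f n) * (∑' n, h n) = ∑' (a : ℕ) (b : ℕ), f a * h b := by
    intro f h
    rw [← ENNReal.tsum_mul_right]
    exact tsum_congr fun a => (ENNReal.tsum_mul_left).symm
  -- the double sum identity
  have hD2 : (∑' (a : ℕ) (b : ℕ), g a * g b)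
      = 2 * (∑' (i : ℕ) (j : ℕ), g i * g (i+j+1)) + ∑' n, g n ^ 2 := by
    rw [split2' (fun a b => g a * g b)]
    have e1 : (∑' (n : ℕ), g n * g n) = ∑' n, g n ^ 2 :=
      tsum_congr fun n => (pow_two (g n)).symm
    have e2 : (∑' (i : ℕ) (j : ℕ), g (i+j+1) * g i) = ∑' (i : ℕ) (j : ℕ), g i * g (i+j+1) :=
      tsum_congr fun i => tsum_congr fun j => mul_comm _ _
    rw [e1, e2]; ring
  -- D in pulled form
  have hDT : (∑' (i : ℕ) (j : ℕ), g i * g (i+j+1))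
      = ∑' (b : ℕ), g b * (∑' k : ℕ, g (b+k+1)) :=
    tsum_congr fun b => ENNReal.tsum_mul_left
  have hV1 : (∑' n, g n) * (∑' (i : ℕ) (j : ℕ), g i * g (i+j+1))
      = ∑' (a : ℕ) (b : ℕ), g a * (g b * (∑' k : ℕ, g (b+k+1))) := by
    rw [hDT, m1]
  -- split V
  have piece1 : (∑' (i : ℕ) (j : ℕ), g i * (g (i+j+1) * (∑' k : ℕ, g ((i+j+1)+k+1))))
      = ∑' (i : ℕ) (j : ℕ) (k : ℕ), g i * g (i+j+1) * g (i+j+k+2) := by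
    refine tsum_congr fun i => tsum_congr fun j => ?_
    have hidx : (∑' k : ℕ, g ((i+j+1)+k+1)) = ∑' k : ℕ, g (i+j+k+2) :=
      tsum_congr fun k => by rw [show (i+j+1)+k+1 = i+j+k+2 from by omega]
    rw [hidx, ← mul_assoc]
    exact (ENNReal.tsum_mul_left).symm
  have piece2 : (∑' (n : ℕ), g n * (g n * (∑' k : ℕ, g (n+k+1))))
      = ∑' (i : ℕ) (j : ℕ), g i ^ 2 * g (i+j+1) := by
    refine tsum_congr fun n => ?_
    rw [← mul_assoc, ← pow_two]
    exact (ENNReal.tsum_mul_left).symm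
  have piece3 : (∑' (i : ℕ) (j : ℕ), g (i+j+1) * (g i * (∑' k : ℕ, g (i+k+1))))
      = 2 * (∑' (i : ℕ) (j : ℕ) (k : ℕ), g i * g (i+j+1) * g (i+j+k+2))
        + ∑' (i : ℕ) (j : ℕ), g i * g (i+j+1) ^ 2 := by
    have hexp : ∀ i : ℕ, (∑' j : ℕ, g (i+j+1) * (g i * (∑' k : ℕ, g (i+k+1))))
        = ∑' (j : ℕ) (k : ℕ), g (i+j+1) * g i * g (i+k+1) := by
      intro i
      refine tsum_congr fun j => ?_
      rw [← mul_assoc]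
      exact (ENNReal.tsum_mul_left).symm
    have hq : ∀ i : ℕ, (∑' (j : ℕ) (k : ℕ), g (i+j+1) * g i * g (i+k+1))
        = (∑' (j : ℕ) (m : ℕ), g i * g (i+j+1) * g (i+j+m+2))
          + (∑' (j : ℕ), g i * g (i+j+1) ^ 2)
          + (∑' (j : ℕ) (m : ℕ), g i * g (i+j+1) * g (i+j+m+2)) := by
      intro i
      rw [split2' (fun j k => g (i+j+1) * g i * g (i+k+1))]
      have q1 : (∑' (j : ℕ) (m : ℕ), g (i+j+1) * g i * g (i+(j+m+1)+1))
          = ∑' (j : ℕ) (m : ℕ), g i * g (i+j+1) * g (i+j+m+2) :=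
        tsum_congr fun j => tsum_congr fun m => by
          rw [show i+(j+m+1)+1 = i+j+m+2 from by omega]; ring
      have q2 : (∑' (j : ℕ), g (i+j+1) * g i * g (i+j+1))
          = ∑' (j : ℕ), g i * g (i+j+1) ^ 2 :=
        tsum_congr fun j => by ring
      have q3 : (∑' (j : ℕ) (m : ℕ), g (i+(j+m+1)+1) * g i * g (i+j+1))
          = ∑' (j : ℕ) (m : ℕ), g i * g (i+j+1) * g (i+j+m+2) :=
        tsum_congr fun j => tsum_congr fun m => by
          rw [show i+(j+m+1)+1 = i+j+m+2 from by omega]; ring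
      rw [q1, q2, q3]
    calc (∑' (i : ℕ) (j : ℕ), g (i+j+1) * (g i * (∑' k : ℕ, g (i+k+1))))
        = ∑' (i : ℕ), ((∑' (j : ℕ) (m : ℕ), g i * g (i+j+1) * g (i+j+m+2))
            + (∑' (j : ℕ), g i * g (i+j+1) ^ 2)
            + (∑' (j : ℕ) (m : ℕ), g i * g (i+j+1) * g (i+j+m+2))) := by
          refine tsum_congr fun i => ?_
          rw [hexp i, hq i]
      _ = (∑' (i : ℕ) (j : ℕ) (m : ℕ), g i * g (i+j+1) * g (i+j+m+2))
            + (∑' (i : ℕ) (j : ℕ), g i * g (i+j+1) ^ 2)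
            + (∑' (i : ℕ) (j : ℕ) (m : ℕ), g i * g (i+j+1) * g (i+j+m+2)) := by
          rw [ENNReal.tsum_add, ENNReal.tsum_add]
      _ = 2 * (∑' (i : ℕ) (j : ℕ) (k : ℕ), g i * g (i+j+1) * g (i+j+k+2))
            + ∑' (i : ℕ) (j : ℕ), g i * g (i+j+1) ^ 2 := by ring
  have hVsplit : (∑' (a : ℕ) (b : ℕ), g a * (g b * (∑' k : ℕ, g (b+k+1))))
      = 3 * (∑' (i : ℕ) (j : ℕ) (k : ℕ), g i * g (i+j+1) * g (i+j+k+2))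
        + (∑' (i : ℕ) (j : ℕ), g i ^ 2 * g (i+j+1))
        + (∑' (i : ℕ) (j : ℕ), g i * g (i+j+1) ^ 2) := by
    rw [split2' (fun a b => g a * (g b * (∑' k : ℕ, g (b+k+1))))]
    rw [piece1, piece2, piece3]
    ring
  -- X + S3 + Y
  have hXY : (∑' n, g n ^ 2) * (∑' n, g n)
      = (∑' (i : ℕ) (j : ℕ), g i ^ 2 * g (i+j+1)) + (∑' n, g n ^ 3)
        + (∑' (i : ℕ) (j : ℕ), g i * g (i+j+1) ^ 2) := by
    rw [m1 (fun n => g n ^ 2) g, split2' (fun a b => g a ^ 2 * g b)]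
    have e1 : (∑' (n : ℕ), g n ^ 2 * g n) = ∑' n, g n ^ 3 :=
      tsum_congr fun n => by ring
    have e2 : (∑' (i : ℕ) (j : ℕ), g (i+j+1) ^ 2 * g i)
        = ∑' (i : ℕ) (j : ℕ), g i * g (i+j+1) ^ 2 :=
      tsum_congr fun i => tsum_congr fun j => mul_comm _ _
    rw [e1, e2]
  -- assembly
  have final : (∑' n, g n) ^ 3 + 2 * (∑' n, g n ^ 3)
      = 6 * (∑' (i : ℕ) (j : ℕ) (k : ℕ), g i * g (i+j+1) * g (i+j+k+2))
        + 3 * ((∑' n, g n) * (∑' n, g n ^ 2)) := by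
    calc (∑' n, g n) ^ 3 + 2 * (∑' n, g n ^ 3)
        = (∑' n, g n) * ((∑' n, g n) * (∑' n, g n)) + 2 * (∑' n, g n ^ 3) := by ring
      _ = (∑' n, g n) * (2 * (∑' (i : ℕ) (j : ℕ), g i * g (i+j+1)) + ∑' n, g n ^ 2)
            + 2 * (∑' n, g n ^ 3) := by rw [m1 g g, hD2]
      _ = 2 * ((∑' n, g n) * (∑' (i : ℕ) (j : ℕ), g i * g (i+j+1)))
            + (∑' n, g n) * (∑' n, g n ^ 2) + 2 * (∑' n, g n ^ 3) := by ring
      _ = 2 * (3 * (∑' (i : ℕ) (j : ℕ) (k : ℕ), g i * g (i+j+1) * g (i+j+k+2))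
            + (∑' (i : ℕ) (j : ℕ), g i ^ 2 * g (i+j+1))
            + (∑' (i : ℕ) (j : ℕ), g i * g (i+j+1) ^ 2))
            + (∑' n, g n) * (∑' n, g n ^ 2) + 2 * (∑' n, g n ^ 3) := by
          rw [hV1, hVsplit]
      _ = 6 * (∑' (i : ℕ) (j : ℕ) (k : ℕ), g i * g (i+j+1) * g (i+j+k+2))
            + 2 * ((∑' (i : ℕ) (j : ℕ), g i ^ 2 * g (i+j+1)) + (∑' n, g n ^ 3)
              + (∑' (i : ℕ) (j : ℕ), g i * g (i+j+1) ^ 2))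
            + (∑' n, g n) * (∑' n, g n ^ 2) := by ring
      _ = 6 * (∑' (i : ℕ) (j : ℕ) (k : ℕ), g i * g (i+j+1) * g (i+j+k+2))
            + 2 * ((∑' n, g n ^ 2) * (∑' n, g n))
            + (∑' n, g n) * (∑' n, g n ^ 2) := by rw [hXY]
      _ = 6 * (∑' (i : ℕ) (j : ℕ) (k : ℕ), g i * g (i+j+1) * g (i+j+k+2))
            + 3 * ((∑' n, g n) * (∑' n, g n ^ 2)) := by ring
  exact final.symm

noncomputable def gE : ℕ → ℝ≥0∞ := fun n => ENNReal.ofReal ((1:ℝ)/((n:ℝ)+1/2)^2)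

lemma gE_def (n : ℕ) : gE n = ENNReal.ofReal ((1:ℝ)/((n:ℝ)+1/2)^2) := rfl

def e3 : (ℕ × ℕ × ℕ) ≃ {p : ℕ × ℕ × ℕ // 0 < p.1 ∧ p.1 < p.2.1 ∧ p.2.1 < p.2.2} where
  toFun r := ⟨(r.1+1, r.1+r.2.1+2, r.1+r.2.1+r.2.2+3), by dsimp only; omega⟩
  invFun x := (x.1.1 - 1, x.1.2.1 - x.1.1 - 1, x.1.2.2 - x.1.2.1 - 1)
  left_inv r := by
    obtain ⟨a, b, c⟩ := r
    simp only [Prod.mk.injEq]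
    omega
  right_inv x := by
    obtain ⟨⟨a, b, c⟩, h⟩ := x
    dsimp only at h
    apply Subtype.ext
    simp only [Prod.mk.injEq]
    omega

theorem stmt11 :
    (∑' x : {p : ℕ × ℕ × ℕ // 0 < p.1 ∧ p.1 < p.2.1 ∧ p.2.1 < p.2.2},
        (1 : ℝ) / (((x.1.1 : ℝ) - 1/2) ^ 2 * ((x.1.2.1 : ℝ) - 1/2) ^ 2
          * ((x.1.2.2 : ℝ) - 1/2) ^ 2))
      = (1/48) * ∑' m : ℕ, (1 : ℝ) / ((m : ℝ) + 1/2) ^ 6 := by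
  have hnn : ∀ n : ℕ, (0:ℝ) ≤ (1:ℝ)/((n:ℝ)+1/2)^2 := fun n => by positivity
  have hS1 : (∑' n, gE n) = ENNReal.ofReal (π^2/2) := by
    rw [← hs_two.tsum_eq, ENNReal.ofReal_tsum_of_nonneg hnn hs_two.summable]
    exact tsum_congr fun n => rfl
  have hS2 : (∑' n, gE n ^ 2) = ENNReal.ofReal (π^4/6) := by
    have hfun : ∀ n : ℕ, gE n ^ 2 = ENNReal.ofReal ((1:ℝ)/((n:ℝ)+1/2)^4) := by
      intro n
      rw [gE_def, ← ENNReal.ofReal_pow (hnn n)]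
      congr 1
      rw [div_pow, one_pow, ← pow_mul]
    have hnn4 : ∀ n : ℕ, (0:ℝ) ≤ (1:ℝ)/((n:ℝ)+1/2)^4 := fun n => by positivity
    calc (∑' n, gE n ^ 2) = ∑' (n : ℕ), ENNReal.ofReal ((1:ℝ)/((n:ℝ)+1/2)^4) :=
          tsum_congr hfun
      _ = ENNReal.ofReal (π^4/6) := by
          rw [← ENNReal.ofReal_tsum_of_nonneg hnn4 hs_four.summable, hs_four.tsum_eq]
  have hS3 : (∑' n, gE n ^ 3) = ENNReal.ofReal (π^6/15) := by
    have hfun : ∀ n : ℕ, gE n ^ 3 = ENNReal.ofReal ((1:ℝ)/((n:ℝ)+1/2)^6) := by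
      intro n
      rw [gE_def, ← ENNReal.ofReal_pow (hnn n)]
      congr 1
      rw [div_pow, one_pow, ← pow_mul]
    have hnn6 : ∀ n : ℕ, (0:ℝ) ≤ (1:ℝ)/((n:ℝ)+1/2)^6 := fun n => by positivity
    calc (∑' n, gE n ^ 3) = ∑' (n : ℕ), ENNReal.ofReal ((1:ℝ)/((n:ℝ)+1/2)^6) :=
          tsum_congr hfun
      _ = ENNReal.ofReal (π^6/15) := by
          rw [← ENNReal.ofReal_tsum_of_nonneg hnn6 hs_six.summable, hs_six.tsum_eq]
  have hkey := key gE
  rw [hS1, hS2, hS3] at hkey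
  have hLHS3 : 3 * ((ENNReal.ofReal (π^2/2)) * ENNReal.ofReal (π^4/6))
      = ENNReal.ofReal (π^6/4) := by
    rw [← ENNReal.ofReal_mul (by positivity), ← ENNReal.ofReal_ofNat 3,
      ← ENNReal.ofReal_mul (by norm_num)]
    congr 1
    ring
  have hRHS : (ENNReal.ofReal (π^2/2))^3 + 2 * ENNReal.ofReal (π^6/15)
      = ENNReal.ofReal (π^6/120) + ENNReal.ofReal (π^6/4) := by
    rw [← ENNReal.ofReal_pow (by positivity), ← ENNReal.ofReal_ofNat 2,
      ← ENNReal.ofReal_mul (by norm_num),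
      ← ENNReal.ofReal_add (by positivity) (by positivity),
      ← ENNReal.ofReal_add (by positivity) (by positivity)]
    congr 1
    ring
  rw [hLHS3, hRHS] at hkey
  have hE6 : 6 * (∑' (i : ℕ) (j : ℕ) (k : ℕ), gE i * gE (i+j+1) * gE (i+j+k+2))
      = ENNReal.ofReal (π^6/120) :=
    WithTop.add_right_cancel ENNReal.ofReal_ne_top hkey
  have hE : (∑' (i : ℕ) (j : ℕ) (k : ℕ), gE i * gE (i+j+1) * gE (i+j+k+2))
      = ENNReal.ofReal (π^6/720) := by
    have h6 : (6 : ℝ≥0∞) ≠ 0 := by norm_num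
    have h6t : (6 : ℝ≥0∞) ≠ ⊤ := by
      simp
    rw [← ENNReal.mul_right_inj h6 h6t, hE6, ← ENNReal.ofReal_ofNat 6,
      ← ENNReal.ofReal_mul (by norm_num)]
    congr 1
    ring
  have hGsum : (∑' r : ℕ × ℕ × ℕ, gE r.1 * gE (r.1+r.2.1+1) * gE (r.1+r.2.1+r.2.2+2))
      = ENNReal.ofReal (π^6/720) := by
    calc (∑' r : ℕ × ℕ × ℕ, gE r.1 * gE (r.1+r.2.1+1) * gE (r.1+r.2.1+r.2.2+2))
        = ∑' (a : ℕ) (p : ℕ × ℕ), gE a * gE (a+p.1+1) * gE (a+p.1+p.2+2) :=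
          ENNReal.tsum_prod'
      _ = ∑' (i : ℕ) (j : ℕ) (k : ℕ), gE i * gE (i+j+1) * gE (i+j+k+2) :=
          tsum_congr fun a => ENNReal.tsum_prod'
      _ = ENNReal.ofReal (π^6/720) := hE
  have hterm : ∀ r : ℕ × ℕ × ℕ,
      (1 : ℝ) / ((((e3 r).1.1 : ℝ) - 1/2) ^ 2 * (((e3 r).1.2.1 : ℝ) - 1/2) ^ 2
          * (((e3 r).1.2.2 : ℝ) - 1/2) ^ 2)
        = (gE r.1 * gE (r.1+r.2.1+1) * gE (r.1+r.2.1+r.2.2+2)).toReal := by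
    intro r
    obtain ⟨a, b, c⟩ := r
    have c1 : (((a+1 : ℕ) : ℝ)) - 1/2 = (a : ℝ) + 1/2 := by push_cast; ring
    have c2 : (((a+b+2 : ℕ) : ℝ)) - 1/2 = ((a+b+1 : ℕ) : ℝ) + 1/2 := by push_cast; ring
    have c3 : (((a+b+c+3 : ℕ) : ℝ)) - 1/2 = ((a+b+c+2 : ℕ) : ℝ) + 1/2 := by push_cast; ring
    show (1 : ℝ) / ((((a+1 : ℕ) : ℝ) - 1/2) ^ 2 * (((a+b+2 : ℕ) : ℝ) - 1/2) ^ 2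
          * (((a+b+c+3 : ℕ) : ℝ) - 1/2) ^ 2) = _
    rw [c1, c2, c3, gE_def, gE_def, gE_def,
      ← ENNReal.ofReal_mul (by positivity), ← ENNReal.ofReal_mul (by positivity),
      ENNReal.toReal_ofReal (by positivity)]
    have hA : ((a : ℝ) + 1/2) ^ 2 ≠ 0 := by positivity
    have hB : (((a+b+1 : ℕ) : ℝ) + 1/2) ^ 2 ≠ 0 := by positivity
    have hC : (((a+b+c+2 : ℕ) : ℝ) + 1/2) ^ 2 ≠ 0 := by positivity
    field_simp
  have hne : ∀ r : ℕ × ℕ × ℕ,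
      gE r.1 * gE (r.1+r.2.1+1) * gE (r.1+r.2.1+r.2.2+2) ≠ ⊤ :=
    fun r => ENNReal.mul_ne_top
      (ENNReal.mul_ne_top ENNReal.ofReal_ne_top ENNReal.ofReal_ne_top)
      ENNReal.ofReal_ne_top
  rw [← Equiv.tsum_eq e3]
  calc (∑' r : ℕ × ℕ × ℕ,
        (1 : ℝ) / ((((e3 r).1.1 : ℝ) - 1/2) ^ 2 * (((e3 r).1.2.1 : ℝ) - 1/2) ^ 2
          * (((e3 r).1.2.2 : ℝ) - 1/2) ^ 2))
      = ∑' r : ℕ × ℕ × ℕ, (gE r.1 * gE (r.1+r.2.1+1) * gE (r.1+r.2.1+r.2.2+2)).toReal :=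
        tsum_congr hterm
    _ = (∑' r : ℕ × ℕ × ℕ, gE r.1 * gE (r.1+r.2.1+1) * gE (r.1+r.2.1+r.2.2+2)).toReal :=
        (ENNReal.tsum_toReal_eq hne).symm
    _ = (ENNReal.ofReal (π^6/720)).toReal := by rw [hGsum]
    _ = π^6/720 := ENNReal.toReal_ofReal (by positivity)
    _ = (1/48) * (π^6/15) := by ring
    _ = (1/48) * ∑' m : ℕ, (1 : ℝ) / ((m : ℝ) + 1/2) ^ 6 := by rw [hs_six.tsum_eq]
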